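/- Let S be a finite extension of ℚ_3 with normalized valuation v in which −1 is not a square. Suppose x, y, z, w are elements of the valuation ring of S with min(v(x), v(y), v(z), v(w)) = 0 satisfying w² = −6x⁴ − 3y⁴ + 2z⁴. Then v(−x² − y² + z²) = 0; in particular it is even. -/

import Mathlib

open WithZero Multiplicative Filter Topology

local notation "ℤₘ₀" => WithZero (Multiplicative ℤ)


-- WithZero (Multiplicative ℤ) arithmetic helpers

private lemma wz_pow_le_one {γ : ℤₘ₀} (h : γ ≤ 1) (n : ℕ) : γ ^ n ≤ 1 := by
  induction n with
  | zero => simp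
  | succ n ih => calc γ ^ (n+1) = γ ^ n * γ := pow_succ γ n
                 _ ≤ 1 * 1 := mul_le_mul' ih h
                 _ = 1 := one_mul 1

private lemma wz_pow_lt_one {γ : ℤₘ₀} (h : γ < 1) {n : ℕ} (hn : n ≠ 0) : γ ^ n < 1 := by
  obtain ⟨m, rfl⟩ := Nat.exists_eq_succ_of_ne_zero hn
  calc γ ^ (m+1) = γ ^ m * γ := pow_succ γ m
    _ ≤ 1 * γ := mul_le_mul_left (wz_pow_le_one h.le m) γ
    _ = γ := one_mul γ
    _ < 1 := h

private lemma wz_pow_anti {γ : ℤₘ₀} (h : γ ≤ 1) {a b : ℕ} (hab : a ≤ b) :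
    γ ^ b ≤ γ ^ a := by
  have : γ ^ b = γ ^ a * γ ^ (b - a) := by rw [← pow_add]; congr 1; omega
  rw [this]
  calc γ ^ a * γ ^ (b-a) ≤ γ ^ a * 1 := mul_le_mul_right (wz_pow_le_one h _) _
    _ = γ ^ a := mul_one _

private lemma wz_sq_eq_one {γ : ℤₘ₀} (h : γ * γ = 1) : γ = 1 := by
  rcases lt_trichotomy γ 1 with hl | he | hg
  · exfalso
    have : γ * γ < 1 := by
      calc γ * γ ≤ γ * 1 := mul_le_mul_right hl.le γ
        _ = γ := mul_one γ
        _ < 1 := hl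
    exact this.ne h
  · exact he
  · exfalso
    have : 1 < γ * γ := by
      calc 1 < γ := hg
        _ = γ * 1 := (mul_one γ).symm
        _ ≤ γ * γ := mul_le_mul_right hg.le γ
    exact this.ne' h

private lemma wz_exists_pow_lt {ε : ℤₘ₀} (h : ε < 1) (γ : ℤₘ₀ˣ) :
    ∃ k : ℕ, ∀ j : ℕ, k ≤ j → ε ^ j < (γ : ℤₘ₀) := by
  rcases eq_or_ne ε 0 with rfl | hε
  · exact ⟨1, fun j hj => by
      rw [zero_pow (by omega)]; exact Units.zero_lt γ⟩
  · set e := unzero hε with he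
    set g := unzero γ.ne_zero with hg
    have hc : e.toAdd ≤ -1 := by
      have : e < 1 := by
        rw [← WithZero.coe_lt_coe, WithZero.coe_unzero]
        simpa using h
      have h2 : e.toAdd < 0 := by simpa using Multiplicative.toAdd_lt.mpr this
      omega
    refine ⟨g.toAdd.natAbs + 1, fun j hj => ?_⟩
    have hj' : (g.toAdd.natAbs + 1 : ℤ) ≤ (j:ℤ) := by exact_mod_cast hj
    have hmul : (j:ℤ) * e.toAdd ≤ (j:ℤ) * (-1) :=
      mul_le_mul_of_nonneg_left hc (by positivity)
    have hlt : (j:ℤ) * e.toAdd < g.toAdd := by omega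
    have hε' : ε ^ j = ((e ^ j : Multiplicative ℤ) : ℤₘ₀) := by
      rw [WithZero.coe_pow, WithZero.coe_unzero]
    rw [hε', ← WithZero.coe_unzero γ.ne_zero, WithZero.coe_lt_coe, ← Multiplicative.toAdd_lt,
      toAdd_pow]
    simpa [smul_eq_mul] using hlt


private lemma padic_nth_root (n : ℕ) (hn : n % 6 = 5) (b : ℤ_[3]) (hb : ‖b‖ = 1) :
    ∃ s : ℤ_[3], s ^ n = b := by
  obtain ⟨q, rfl⟩ : ∃ q, n = 6*q+5 := ⟨n/6, by omega⟩
  set n := 6*q+5 with hn'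
  -- 3 divides b^2 - 1
  have hdvd : (3:ℤ_[3]) ∣ b ^ 2 - 1 := by
    have hu : IsUnit b := PadicInt.isUnit_iff.mpr hb
    have hz : (PadicInt.toZMod b) ≠ 0 := (hu.map PadicInt.toZMod).ne_zero
    have hsq : ∀ c : ZMod 3, c ≠ 0 → c ^ 2 = 1 := by decide
    have hker : b ^ 2 - 1 ∈ RingHom.ker (PadicInt.toZMod (p := 3)) := by
      simp [RingHom.mem_ker, map_sub, map_pow, hsq _ hz]
    rw [PadicInt.ker_toZMod, IsLocalRing.mem_maximalIdeal, mem_nonunits_iff,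
      PadicInt.isUnit_iff] at hker
    have := (PadicInt.norm_lt_one_iff_dvd _).mp (lt_of_le_of_ne (PadicInt.norm_le_one _) hker)
    simpa using this
  have hdvd2 : (3:ℤ_[3]) ∣ b ^ n - b := by
    have h1 : b ^ n - b = b * ((b^2) ^ (3*q+2) - 1) := by rw [← pow_mul, hn']; ring_nf
    have h2 : b^2 - 1 ∣ (b^2) ^ (3*q+2) - 1 := by
      simpa using sub_dvd_pow_sub_pow (b^2) 1 (3*q+2)
    exact h1 ▸ Dvd.dvd.mul_left (dvd_trans hdvd h2) b
  -- apply Hensel's lemma to X^n - b at the point b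
  set F : Polynomial ℤ_[3] := Polynomial.X ^ n - Polynomial.C b with hF
  have hevF : F.eval b = b ^ n - b := by simp [hF]
  have hderiv : F.derivative.eval b = (n:ℤ_[3]) * b ^ (n-1) := by
    simp [hF, Polynomial.derivative_X_pow]
  have hnormderiv : ‖F.derivative.eval b‖ = 1 := by
    rw [hderiv, norm_mul, norm_pow, hb, one_pow, mul_one]
    refine le_antisymm (PadicInt.norm_le_one _) (not_lt.mp fun hlt => ?_)
    have : ((3:ℕ):ℤ) ∣ ((n:ℕ):ℤ) := by
      have := (PadicInt.norm_int_lt_one_iff_dvd (n:ℤ)).mp (by push_cast at hlt ⊢; exact hlt)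
      exact_mod_cast this
    have : (3:ℕ) ∣ n := by exact_mod_cast this
    omega
  have hnorm : ‖F.eval b‖ < ‖F.derivative.eval b‖ ^ 2 := by
    rw [hnormderiv, one_pow, hevF]
    exact (PadicInt.norm_lt_one_iff_dvd _).mpr hdvd2
  obtain ⟨z, hz, -⟩ := hensels_lemma hnorm
  exact ⟨z, sub_eq_zero.mp (by simpa [hF] using hz)⟩

private lemma valg_unit {S : Type*} [Field S] [Algebra ℚ_[3] S]
    (v : Valuation S ℤₘ₀) (b : ℚ_[3]) (hb : ‖b‖ = 1) :
    v (algebraMap ℚ_[3] S b) = 1 := by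
  have hb0 : b ≠ 0 := by intro h; rw [h] at hb; simp at hb
  have halg0 : algebraMap ℚ_[3] S b ≠ 0 := fun h =>
    hb0 ((algebraMap ℚ_[3] S).injective (by rw [h, map_zero]))
  have hγ : v (algebraMap ℚ_[3] S b) ≠ 0 := v.ne_zero_iff.mpr halg0
  set a : ℤ := (unzero hγ).toAdd with ha
  have key : ∀ m : ℕ, ((6*m+5 : ℕ) : ℤ) ∣ a := by
    intro m
    obtain ⟨s, hs⟩ := padic_nth_root (6*m+5) (by omega) ⟨b, hb.le⟩
      (by exact hb)
    have hsQ : ((s : ℚ_[3])) ^ (6*m+5) = b := by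
      have := congrArg (fun t : ℤ_[3] => (t : ℚ_[3])) hs
      push_cast at this
      exact this
    have hs0 : (s : ℚ_[3]) ≠ 0 := by
      intro h
      rw [h, zero_pow (by omega)] at hsQ
      exact hb0 hsQ.symm
    have hδ0 : algebraMap ℚ_[3] S (s : ℚ_[3]) ≠ 0 := fun h =>
      hs0 ((algebraMap ℚ_[3] S).injective (by rw [h, map_zero]))
    have hδ : v (algebraMap ℚ_[3] S (s : ℚ_[3])) ≠ 0 := v.ne_zero_iff.mpr hδ0
    have hpow : v (algebraMap ℚ_[3] S (s : ℚ_[3])) ^ (6*m+5) = v (algebraMap ℚ_[3] S b) := by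
      rw [← v.map_pow, ← map_pow, hsQ]
    have hunz : unzero hδ ^ (6*m+5) = unzero hγ := by
      rw [← WithZero.coe_inj, WithZero.coe_pow, WithZero.coe_unzero, WithZero.coe_unzero, hpow]
    have := congrArg Multiplicative.toAdd hunz
    rw [toAdd_pow] at this
    exact ⟨(unzero hδ).toAdd, by rw [ha, ← this, nsmul_eq_mul]⟩
  have ha0 : a = 0 := by
    by_contra h
    have hd := key a.natAbs
    have hle := Int.le_of_dvd (abs_pos.mpr h) ((dvd_abs _ _).mpr hd)
    rw [Int.abs_eq_natAbs] at hle
    omega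
  have : unzero hγ = 1 := by
    rw [← toAdd_eq_zero] at *
    exact ha0
  rw [← WithZero.coe_unzero hγ, this, WithZero.coe_one]

private lemma valg_le {S : Type*} [Field S] [Algebra ℚ_[3] S]
    (v : Valuation S ℤₘ₀) (h3 : v (3:S) ≤ 1) (b : ℚ_[3]) (hb : ‖b‖ ≤ 1) :
    v (algebraMap ℚ_[3] S b) ≤ 1 := by
  rcases eq_or_ne b 0 with rfl | hb0
  · simp
  · set B : ℤ_[3] := ⟨b, hb⟩ with hB
    have hB0 : B ≠ 0 := fun h => hb0 (by simpa [hB] using congrArg (fun t : ℤ_[3] => (t : ℚ_[3])) h)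
    have hspec := PadicInt.unitCoeff_spec hB0
    have hbeq : b = ((PadicInt.unitCoeff hB0 : ℤ_[3]) : ℚ_[3]) *
        3 ^ (B.valuation) := by
      have := congrArg (fun t : ℤ_[3] => (t : ℚ_[3])) hspec
      push_cast at this
      simpa [hB, show ((3:ℤ_[3]) : ℚ_[3]) = 3 from PadicInt.coe_natCast 3] using this
    have hunit : ‖((PadicInt.unitCoeff hB0 : ℤ_[3]) : ℚ_[3])‖ = 1 := by
      rw [← PadicInt.norm_def]; exact PadicInt.norm_units _
    rw [hbeq, map_mul, map_pow, v.map_mul, v.map_pow, valg_unit v _ hunit, one_mul]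
    have h33 : algebraMap ℚ_[3] S (3:ℚ_[3]) = (3:S) := map_ofNat _ 3
    rw [h33]
    exact wz_pow_le_one h3 _

private lemma v_two {S : Type*} [Field S] (v : Valuation S ℤₘ₀) (h3 : v (3:S) < 1) :
    v (2:S) = 1 := by
  have h2le : v (2:S) ≤ 1 := by
    have h23 : (2:S) = 3 - 1 := by norm_num
    rw [h23]
    exact le_trans (v.map_sub _ _) (max_le h3.le (le_of_eq v.map_one))
  refine le_antisymm h2le (not_lt.mp fun hlt => ?_)
  have h4 : v (4:S) < 1 := by
    have h42 : (4:S) = 2*2 := by norm_num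
    rw [h42, v.map_mul]
    calc v (2:S) * v 2 ≤ v 2 * 1 := mul_le_mul_right h2le _
      _ = v 2 := mul_one _
      _ < 1 := hlt
  have hcon : (1:ℤₘ₀) < 1 := by
    calc (1:ℤₘ₀) = v 1 := v.map_one.symm
      _ = v ((4:S) - 3) := by norm_num
      _ ≤ max (v 4) (v 3) := v.map_sub _ _
      _ < 1 := max_lt h4 h3
  exact hcon.false

private lemma sqrt_neg_one {S : Type*} [Field S] [Algebra ℚ_[3] S] [FiniteDimensional ℚ_[3] S]
    (v : Valuation S ℤₘ₀) (h3 : v (3:S) < 1) (u : S) (hu : v u ≤ 1)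
    (h1 : v (u ^ 2 + 1) < 1) : ∃ s : S, s ^ 2 = -1 := by
  have v2 : v (2:S) = 1 := v_two v h3
  have h20 : (2:S) ≠ 0 := by
    intro h
    rw [h, v.map_zero] at v2
    exact zero_ne_one v2
  -- v u = 1
  have hu1 : v u = 1 := by
    rcases eq_or_lt_of_le hu with h | h
    · exact h
    · exfalso
      have : v (u ^ 2 + 1) = 1 := by
        rw [Valuation.map_add_eq_of_lt_right]
        · exact v.map_one
        · rw [v.map_one, v.map_pow]
          exact wz_pow_lt_one h (by norm_num)
      rw [this] at h1
      exact h1.false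
  rcases eq_or_ne (u ^ 2 + 1) 0 with h0 | h0
  · exact ⟨u, eq_neg_of_add_eq_zero_left h0⟩
  set ε := v (u ^ 2 + 1) with hε
  -- set up the valuation topology
  letI : Valued S ℤₘ₀ := Valued.mk' v
  have hvv : (Valued.v : Valuation S ℤₘ₀) = v := rfl
  -- the algebra map is continuous
  have halg : Continuous (algebraMap ℚ_[3] S) := by
    apply continuous_of_continuousAt_zero (algebraMap ℚ_[3] S)
    rw [ContinuousAt, map_zero, (Valued.hasBasis_nhds_zero S ℤₘ₀).tendsto_right_iff]
    intro γ₀ _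
    obtain ⟨γ, hγ⟩ : ∃ γ : ℤₘ₀ˣ, (γ : ℤₘ₀) = MonoidWithZeroHom.ValueGroup₀.embedding γ₀.1 :=
      ⟨Units.mk0 (MonoidWithZeroHom.ValueGroup₀.embedding γ₀.1) ((map_ne_zero _).mpr γ₀.ne_zero), rfl⟩
    obtain ⟨k, hk⟩ := wz_exists_pow_lt h3 γ
    have hball : Metric.ball (0:ℚ_[3]) ((3:ℝ)⁻¹ ^ k) ∈ 𝓝 (0:ℚ_[3]) :=
      Metric.ball_mem_nhds _ (by positivity)
    filter_upwards [hball] with a ha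
    show Valued.v.restrict (algebraMap ℚ_[3] S a) < γ₀.1
    rw [Valuation.restrict_lt_iff_lt_embedding, ← hγ]
    rw [Metric.mem_ball, dist_zero_right] at ha
    rcases eq_or_ne a 0 with rfl | ha0
    · rw [map_zero, hvv, v.map_zero]
      exact Units.zero_lt γ
    · have h3k : ((3:ℚ_[3]) ^ k) ≠ 0 := by
        apply pow_ne_zero
        exact_mod_cast (by norm_num : (3:ℚ_[3]) ≠ 0)
      have hnorm3 : ‖(3:ℚ_[3])‖ = (3:ℝ)⁻¹ := by
        have := Padic.norm_p (p := 3)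
        simpa using this
      have hble : ‖a / 3 ^ k‖ ≤ 1 := by
        rw [norm_div, norm_pow, hnorm3, div_le_one (by positivity)]
        exact ha.le
      have hdecomp : algebraMap ℚ_[3] S a = (3:S) ^ k * algebraMap ℚ_[3] S (a / 3 ^ k) := by
        rw [← map_ofNat (algebraMap ℚ_[3] S) 3, ← map_pow, ← map_mul]
        congr 1
        field_simp
      rw [hvv, hdecomp, v.map_mul, v.map_pow]
      calc v (3:S) ^ k * v (algebraMap ℚ_[3] S (a / 3 ^ k))
          ≤ v (3:S) ^ k * 1 := mul_le_mul_right (valg_le v h3.le _ hble) _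
        _ = v (3:S) ^ k := mul_one _
        _ < γ := hk k le_rfl
  haveI : ContinuousSMul ℚ_[3] S := by
    refine ⟨?_⟩
    have : (fun p : ℚ_[3] × S => p.1 • p.2) =
        fun p : ℚ_[3] × S => algebraMap ℚ_[3] S p.1 * p.2 := by
      funext p; rw [Algebra.smul_def]
    rw [this]
    exact (halg.comp continuous_fst).mul continuous_snd
  haveI : CompleteSpace S := FiniteDimensional.complete ℚ_[3] S
  -- Newton iteration
  set f : ℕ → S := fun n => Nat.rec u (fun _ t => (t - t⁻¹)/2) n with hfdef
  have hfs : ∀ n, f (n+1) = (f n - (f n)⁻¹)/2 := fun n => rfl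
  have hinv : ∀ n, v (f n) = 1 ∧ v (f n ^ 2 + 1) ≤ ε ^ (2^n) := by
    intro n
    induction n with
    | zero =>
      refine ⟨hu1, ?_⟩
      simp only [pow_zero, pow_one]
      exact le_rfl
    | succ n ih =>
      obtain ⟨h1n, h2n⟩ := ih
      have ht0 : f n ≠ 0 := by
        intro h
        rw [h, v.map_zero] at h1n
        exact zero_ne_one h1n
      have hlt1 : v (f n ^ 2 + 1) < 1 :=
        lt_of_le_of_lt h2n (wz_pow_lt_one h1 (by positivity : (0:ℕ) < 2^n).ne')
      have e1 : f (n+1) = (f n ^ 2 - 1)/(2 * f n) := by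
        rw [hfs]; field_simp
      have e2 : f (n+1) ^ 2 + 1 = ((f n ^ 2 + 1)/(2 * f n)) ^ 2 := by
        rw [hfs]; field_simp; ring
      have hsub : v (f n ^ 2 - 1) = 1 := by
        have hr : f n ^ 2 - 1 = (f n ^ 2 + 1) - 2 := by ring
        rw [hr, Valuation.map_sub_eq_of_lt_right _ (by rw [v2]; exact hlt1), v2]
      constructor
      · rw [e1, v.map_div, v.map_mul, hsub, v2, h1n]
        simp
      · rw [e2, v.map_pow, v.map_div, v.map_mul, v2, h1n, mul_one, div_one]
        calc v (f n ^ 2 + 1) ^ 2 ≤ (ε ^ 2^n) ^ 2 := pow_le_pow_left' h2n 2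
          _ = ε ^ (2^(n+1)) := by rw [← pow_mul, ← pow_succ]
  have hdiff : ∀ n, v (f (n+1) - f n) ≤ ε ^ (2^n) := by
    intro n
    have ht0 : f n ≠ 0 := by
      intro h
      have := (hinv n).1
      rw [h, v.map_zero] at this
      exact zero_ne_one this
    have e3 : f (n+1) - f n = -((f n ^ 2 + 1)/(2 * f n)) := by
      rw [hfs]; field_simp; ring
    rw [e3, v.map_neg, v.map_div, v.map_mul, v2, (hinv n).1, mul_one, div_one]
    exact (hinv n).2
  have htel : ∀ n m, n ≤ m → v (f m - f n) ≤ ε ^ (2^n) := by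
    intro n m h
    induction m, h using Nat.le_induction with
    | base => simpa using zero_le'
    | succ m hm ih =>
      have hr : f (m+1) - f n = (f (m+1) - f m) + (f m - f n) := by ring
      rw [hr]
      refine le_trans (v.map_add _ _) (max_le ?_ ih)
      exact le_trans (hdiff m) (wz_pow_anti h1.le (Nat.pow_le_pow_right (by norm_num) hm))
  have hcau : CauchySeq f := by
    rw [(Valued.hasBasis_uniformity S ℤₘ₀).cauchySeq_iff]
    intro γ₀ _
    obtain ⟨γ, hγ⟩ : ∃ γ : ℤₘ₀ˣ, (γ : ℤₘ₀) = MonoidWithZeroHom.ValueGroup₀.embedding γ₀.1 :=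
      ⟨Units.mk0 (MonoidWithZeroHom.ValueGroup₀.embedding γ₀.1) ((map_ne_zero _).mpr γ₀.ne_zero), rfl⟩
    obtain ⟨k, hk⟩ := wz_exists_pow_lt h1 γ
    refine ⟨k, fun m hm n hn => ?_⟩
    show (Valued.v : Valuation S ℤₘ₀).restrict (f n - f m) < γ₀.1
    rw [Valuation.restrict_lt_iff_lt_embedding, ← hγ, hvv]
    rcases le_total m n with h | h
    · exact lt_of_le_of_lt (htel m n h) (hk (2^m) (le_trans hm (Nat.lt_two_pow_self (n := m)).le))
    · rw [v.map_sub_swap]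
      exact lt_of_le_of_lt (htel n m h) (hk (2^n) (le_trans hn (Nat.lt_two_pow_self (n := n)).le))
  obtain ⟨L, hL⟩ := cauchySeq_tendsto_of_complete hcau
  have ht1 : Tendsto (fun n => f n ^ 2 + 1) atTop (𝓝 (L ^ 2 + 1)) :=
    (hL.pow 2).add tendsto_const_nhds
  have ht0 : Tendsto (fun n => f n ^ 2 + 1) atTop (𝓝 (0:S)) := by
    rw [(Valued.hasBasis_nhds_zero S ℤₘ₀).tendsto_right_iff]
    intro γ₀ _
    obtain ⟨γ, hγ⟩ : ∃ γ : ℤₘ₀ˣ, (γ : ℤₘ₀) = MonoidWithZeroHom.ValueGroup₀.embedding γ₀.1 :=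
      ⟨Units.mk0 (MonoidWithZeroHom.ValueGroup₀.embedding γ₀.1) ((map_ne_zero _).mpr γ₀.ne_zero), rfl⟩
    obtain ⟨k, hk⟩ := wz_exists_pow_lt h1 γ
    filter_upwards [Filter.eventually_ge_atTop k] with n hn
    show (Valued.v : Valuation S ℤₘ₀).restrict (f n ^ 2 + 1) < γ₀.1
    rw [Valuation.restrict_lt_iff_lt_embedding, ← hγ, hvv]
    exact lt_of_le_of_lt (hinv n).2 (hk (2^n) (le_trans hn (Nat.lt_two_pow_self (n := n)).le))
  have hL0 : L ^ 2 + 1 = 0 := tendsto_nhds_unique ht1 ht0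
  exact ⟨L, eq_neg_of_add_eq_zero_left hL0⟩

/-- Let `S` be a finite extension of `ℚ₃` with normalized valuation `v` in which `-1` is not
a square.  If `x, y, z, w` lie in the valuation ring with `min(v x, v y, v z, v w) = 0`
(i.e. multiplicatively `max = 1`) and `w² = -6x⁴ - 3y⁴ + 2z⁴`, then `v(-x² - y² + z²) = 0`;
in particular it is even. -/
theorem stmt_11 {S : Type*} [Field S] [Algebra ℚ_[3] S] [FiniteDimensional ℚ_[3] S]
    (v : Valuation S (WithZero (Multiplicative ℤ)))
    (hsurj : Function.Surjective v) (h3 : v (3 : S) < 1)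
    (hneg : ¬∃ s : S, s ^ 2 = (-1 : S))
    (x y z w : S)
    (hx : v x ≤ 1) (hy : v y ≤ 1) (hz : v z ≤ 1) (hw : v w ≤ 1)
    (hmin : max (max (v x) (v y)) (max (v z) (v w)) = 1)
    (heq : w ^ 2 = -6 * x ^ 4 - 3 * y ^ 4 + 2 * z ^ 4) :
    v (-x ^ 2 - y ^ 2 + z ^ 2) = 1 := by
  have v2 : v (2:S) = 1 := v_two v h3
  -- key: no sum of a unit square and an integral square can have small valuation
  have key : ∀ a b : S, v a = 1 → v b ≤ 1 → ¬ v (a ^ 2 + b ^ 2) < 1 := by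
    intro a b ha hb hlt
    have ha0 : a ≠ 0 := by
      intro h
      rw [h, v.map_zero] at ha
      exact zero_ne_one ha
    refine hneg (sqrt_neg_one v h3 (b/a) ?_ ?_)
    · rw [v.map_div, ha, div_one]; exact hb
    · have hr : (b/a) ^ 2 + 1 = (a ^ 2 + b ^ 2)/a ^ 2 := by
        field_simp; ring
      rw [hr, v.map_div, v.map_pow, ha, one_pow, div_one]
      exact hlt
  -- step 1 : w² + z⁴ ≡ 0 mod 3
  have hA : v (w ^ 2 + z ^ 4) < 1 := by
    have hr : w ^ 2 + z ^ 4 = 3 * (-2 * x ^ 4 - y ^ 4 + z ^ 4) := by linear_combination heq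
    rw [hr, v.map_mul]
    have hbound : v (-2 * x ^ 4 - y ^ 4 + z ^ 4) ≤ 1 := by
      refine le_trans (v.map_add _ _) (max_le (le_trans (v.map_sub _ _) (max_le ?_ ?_)) ?_)
      · rw [v.map_mul, v.map_neg, v2, one_mul, v.map_pow]
        exact wz_pow_le_one hx 4
      · rw [v.map_pow]; exact wz_pow_le_one hy 4
      · rw [v.map_pow]; exact wz_pow_le_one hz 4
    calc v (3:S) * v (-2 * x ^ 4 - y ^ 4 + z ^ 4) ≤ v 3 * 1 := mul_le_mul_right hbound _
      _ = v 3 := mul_one _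
      _ < 1 := h3
  have hz1 : v z < 1 := by
    rcases eq_or_lt_of_le hz with h | h
    · exfalso
      refine key (z ^ 2) w (by rw [v.map_pow, h, one_pow]) hw ?_
      have hr : (z ^ 2) ^ 2 + w ^ 2 = w ^ 2 + z ^ 4 := by ring
      rw [hr]; exact hA
    · exact h
  have hw1 : v w < 1 := by
    have hsq : v w * v w < 1 := by
      have hr : w * w = (w ^ 2 + z ^ 4) - z ^ 4 := by ring
      rw [← v.map_mul, hr]
      refine lt_of_le_of_lt (v.map_sub _ _) (max_lt hA ?_)
      rw [v.map_pow]
      exact wz_pow_lt_one hz1 (by norm_num)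
    by_contra h
    have h' : (1:WithZero (Multiplicative ℤ)) ≤ v w := not_lt.mp h
    have : (1:WithZero (Multiplicative ℤ)) ≤ v w * v w := le_trans h' (by
      calc v w = v w * 1 := (mul_one _).symm
        _ ≤ v w * v w := mul_le_mul_right h' _)
    exact (lt_of_le_of_lt this hsq).false
  have hxy : max (v x) (v y) = 1 := by
    rcases max_eq_iff.mp hmin with ⟨h, -⟩ | ⟨h, -⟩
    · exact h
    · exact absurd h (max_lt hz1 hw1).ne
  have hs : v (x ^ 2 + y ^ 2) = 1 := by
    have hle : v (x ^ 2 + y ^ 2) ≤ 1 := by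
      refine le_trans (v.map_add _ _) (max_le ?_ ?_) <;> rw [v.map_pow]
      · exact wz_pow_le_one hx 2
      · exact wz_pow_le_one hy 2
    rcases eq_or_lt_of_le hle with h | h
    · exact h
    · exfalso
      rcases max_eq_iff.mp hxy with ⟨hx1, -⟩ | ⟨hy1, -⟩
      · exact key x y hx1 hy h
      · refine key y x hy1 hx ?_
        rwa [add_comm] at h
  have hr : -x ^ 2 - y ^ 2 + z ^ 2 = z ^ 2 - (x ^ 2 + y ^ 2) := by ring
  rw [hr, Valuation.map_sub_eq_of_lt_right, hs]
  rw [v.map_pow, hs]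
  exact wz_pow_lt_one hz1 (by norm_num)
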